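/- There exist a universal constant C > 0 and ε₀ > 0 such that for every 0 < ε < ε₀ the following holds. Let (X, F, μ) be a probability space, let R_1, …, R_m be a finite measurable partition of X, and let A ∈ F with μ(A) > 0 be such that |μ(R_i)/μ_A(R_i) − 1| < ε for every i = 1, …, m (in particular μ_A(R_i) > 0). Suppose that for each i there is an injective bi-measurable map θ_i : A ∩ R_i → R_i, and that the union of those atoms R_i for which θ_i is NOT ε-measure preserving with respect to the measures μ_{A∩R_i} and μ_{R_i} has μ-measure less than ε. Then the map θ : A → X defined by θ|_{A∩R_i} = θ_i is Cε-measure preserving with respect to the measures μ_A and μ. -/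

import Mathlib

open MeasureTheory ProbabilityTheory

/-- A (bi-measurable) map `θ : (X, μ) → (Y, ν)` is `ε`-measure preserving if there is a
measurable set `E ⊆ X` with `μ E < ε` such that for every measurable `S ⊆ X \ E` one has
`(1 - ε) · ν (θ '' S) ≤ μ S ≤ (1 + ε) · ν (θ '' S)`. -/
def EpsMeasurePreserving {X Y : Type*} [MeasurableSpace X] [MeasurableSpace Y]
    (μ : Measure X) (ν : Measure Y) (θ : X → Y) (ε : ℝ) : Prop :=
  ∃ E : Set X, MeasurableSet E ∧ μ E < ENNReal.ofReal ε ∧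
    ∀ S : Set X, MeasurableSet S → S ⊆ Eᶜ →
      ENNReal.ofReal (1 - ε) * ν (θ '' S) ≤ μ S ∧
        μ S ≤ ENNReal.ofReal (1 + ε) * ν (θ '' S)

set_option maxHeartbeats 1000000 in
/-- gluing lemma. There are a universal constant `C > 0` and `ε₀ > 0`
such that for all `0 < ε < ε₀`: given a probability space `X`, a finite measurable
partition `R_1, …, R_m`, a measurable set `A` of positive measure with
`|μ(R i) / μ_A(R i) - 1| < ε` for all `i`, and injective bi-measurable maps
`θ i : A ∩ R i → R i` such that the union of those atoms `R i` for which `θ i` is not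
`ε`-measure preserving (w.r.t. `μ_{A ∩ R i}` and `μ_{R i}`) has measure `< ε`, the glued
map `θ : A → X` (with `θ = θ i` on `A ∩ R i`) is `C·ε`-measure preserving w.r.t. `μ_A`
and `μ`. Here `μ[|S]` denotes the normalized restriction of `μ` to `S`. -/
theorem glued_map_epsMeasurePreserving :
    ∃ C : ℝ, 0 < C ∧ ∃ ε₀ : ℝ, 0 < ε₀ ∧
      ∀ ε : ℝ, 0 < ε → ε < ε₀ →
        ∀ (X : Type u) [MeasurableSpace X] (μ : Measure X), IsProbabilityMeasure μ →
          ∀ (m : ℕ) (R : Fin m → Set X),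
            (∀ i, MeasurableSet (R i)) →
            Pairwise (Function.onFun Disjoint R) →
            (⋃ i, R i) = Set.univ →
            ∀ A : Set X, MeasurableSet A → 0 < μ A →
              (∀ i, 0 < (μ[|A]) (R i) ∧
                |(μ (R i)).toReal / ((μ[|A]) (R i)).toReal - 1| < ε) →
              ∀ θi : Fin m → X → X,
                (∀ i, Measurable (θi i)) →
                (∀ i, Set.InjOn (θi i) (A ∩ R i)) →
                (∀ i, Set.MapsTo (θi i) (A ∩ R i) (R i)) →
                (∀ i (S : Set X), MeasurableSet S → MeasurableSet (θi i '' S)) →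
                μ (⋃ i ∈ {i : Fin m |
                      ¬ EpsMeasurePreserving (μ[|A ∩ R i]) (μ[|R i]) (θi i) ε}, R i)
                  < ENNReal.ofReal ε →
                ∀ θ : X → X, (∀ i, ∀ x ∈ A ∩ R i, θ x = θi i x) →
                  EpsMeasurePreserving (μ[|A]) μ θ (C * ε) := by
  classical
  refine ⟨10, by norm_num, 1/20, by norm_num, ?_⟩
  intro ε hε hε20 X _ μ hμ m R hRmeas hRdisj hRcover A hA hA0 hratio θi hθmeas hθinj hθmaps
    hθim hbad θ hθ
  set I : Set (Fin m) :=
    {i : Fin m | ¬ EpsMeasurePreserving (μ[|A ∩ R i]) (μ[|R i]) (θi i) ε} with hI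
  have hAne : μ A ≠ 0 := hA0.ne'
  have hAfin : μ A ≠ ⊤ := measure_ne_top μ A
  have hARmeas : ∀ i, MeasurableSet (A ∩ R i) := fun i => hA.inter (hRmeas i)
  have hARne : ∀ i, μ (A ∩ R i) ≠ 0 := by
    intro i h
    have h1 := (hratio i).1
    rw [cond_apply hA μ (R i), h, mul_zero] at h1
    exact lt_irrefl _ h1
  have hARfin : ∀ i, μ (A ∩ R i) ≠ ⊤ := fun i => measure_ne_top _ _
  -- choose exceptional sets per atom
  obtain ⟨F, hF⟩ : ∃ F : Fin m → Set X, ∀ i, MeasurableSet (F i) ∧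
      μ ((A ∩ R i) ∩ F i) ≤ ENNReal.ofReal ε * μ (A ∩ R i) ∧
      (i ∉ I → ∀ S : Set X, MeasurableSet S → S ⊆ (F i)ᶜ →
        ENNReal.ofReal (1 - ε) * (μ[|R i]) (θi i '' S) ≤ (μ[|A ∩ R i]) S ∧
          (μ[|A ∩ R i]) S ≤ ENNReal.ofReal (1 + ε) * (μ[|R i]) (θi i '' S)) := by
    refine ⟨fun i =>
      if h : EpsMeasurePreserving (μ[|A ∩ R i]) (μ[|R i]) (θi i) ε then h.choose else ∅,
      fun i => ?_⟩
    by_cases h : EpsMeasurePreserving (μ[|A ∩ R i]) (μ[|R i]) (θi i) ε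
    · obtain ⟨hmE, hsmall, hprop⟩ := h.choose_spec
      simp only [dif_pos h]
      refine ⟨hmE, ?_, fun _ => hprop⟩
      have := cond_apply (hARmeas i) μ h.choose
      have hle : (μ (A ∩ R i))⁻¹ * μ ((A ∩ R i) ∩ h.choose) ≤ ENNReal.ofReal ε := by
        rw [← this]; exact hsmall.le
      calc μ ((A ∩ R i) ∩ h.choose)
          = μ (A ∩ R i) * ((μ (A ∩ R i))⁻¹ * μ ((A ∩ R i) ∩ h.choose)) := by
            rw [← mul_assoc, ENNReal.mul_inv_cancel (hARne i) (hARfin i), one_mul]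
        _ ≤ μ (A ∩ R i) * ENNReal.ofReal ε := mul_le_mul_right hle _
        _ = ENNReal.ofReal ε * μ (A ∩ R i) := mul_comm _ _
    · simp only [dif_neg h]
      exact ⟨MeasurableSet.empty, by simp, fun hi => absurd (not_not.mp hi) h⟩
  -- basic positivity facts about the atoms
  have hcondfin : ∀ i, (μ[|A]) (R i) ≠ ⊤ := by
    intro i
    rw [cond_apply hA μ (R i)]
    exact ENNReal.mul_ne_top (ENNReal.inv_ne_top.mpr hAne) (measure_ne_top _ _)
  have hc_pos : ∀ i, 0 < ((μ[|A]) (R i)).toReal := fun i =>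
    ENNReal.toReal_pos (hratio i).1.ne' (hcondfin i)
  have hrc : ∀ i, (1 - ε) * ((μ[|A]) (R i)).toReal ≤ (μ (R i)).toReal ∧
      (μ (R i)).toReal ≤ (1 + ε) * ((μ[|A]) (R i)).toReal := by
    intro i
    have h2 := abs_lt.mp (hratio i).2
    have hc := hc_pos i
    constructor
    · nlinarith [(lt_div_iff₀ hc).mp (by linarith [h2.1] :
        (1 - ε : ℝ) < (μ (R i)).toReal / ((μ[|A]) (R i)).toReal)]
    · nlinarith [(div_lt_iff₀ hc).mp (by linarith [h2.2] :
        (μ (R i)).toReal / ((μ[|A]) (R i)).toReal < 1 + ε)]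
  have hr_pos : ∀ i, 0 < (μ (R i)).toReal := by
    intro i
    have := (hrc i).1
    nlinarith [hc_pos i]
  have hRne : ∀ i, μ (R i) ≠ 0 := by
    intro i h
    have := hr_pos i
    rw [h] at this; simp at this
  -- relation a = α * c
  have hac : ∀ i, (μ (A ∩ R i)).toReal = (μ A).toReal * ((μ[|A]) (R i)).toReal := by
    intro i
    have := cond_apply hA μ (R i)
    have hα : (μ A).toReal ≠ 0 := ENNReal.toReal_ne_zero.mpr ⟨hAne, hAfin⟩
    rw [this, ENNReal.toReal_mul, ENNReal.toReal_inv]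
    field_simp
  have hα_pos : 0 < (μ A).toReal := ENNReal.toReal_pos hAne hAfin
  -- key per atom bound : μ (A ∩ R i) ≤ 2 * μ A * μ (R i)
  have hkey2 : ∀ i, μ (A ∩ R i) ≤ ENNReal.ofReal 2 * (μ A * μ (R i)) := by
    intro i
    rw [← ENNReal.toReal_le_toReal (hARfin i) (by
      exact ENNReal.mul_ne_top (by simp) (ENNReal.mul_ne_top hAfin (measure_ne_top _ _)))]
    rw [ENNReal.toReal_mul, ENNReal.toReal_mul, ENNReal.toReal_ofReal (by norm_num), hac i]
    have h2rc : ((μ[|A]) (R i)).toReal ≤ 2 * (μ (R i)).toReal := by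
      nlinarith [(hrc i).1, hc_pos i]
    nlinarith [mul_le_mul_of_nonneg_left h2rc hα_pos.le]
  -- define the exceptional set E
  refine ⟨Aᶜ ∪ (⋃ i ∈ I, R i) ∪ (⋃ i, (A ∩ R i) ∩ F i), ?_, ?_, ?_⟩
  · exact ((hA.compl.union (MeasurableSet.biUnion (Set.to_countable I)
      (fun i _ => hRmeas i))).union (MeasurableSet.iUnion fun i => (hARmeas i).inter (hF i).1))
  · -- measure of E is small
    have t1 : (μ[|A]) Aᶜ = 0 := by
      rw [cond_apply hA, Set.inter_compl_self, measure_empty, mul_zero]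
    have t2 : (μ[|A]) (⋃ i ∈ I, R i) ≤ ENNReal.ofReal 2 * μ (⋃ i ∈ I, R i) := by
      rw [cond_apply hA]
      have hsum : μ (A ∩ ⋃ i ∈ I, R i) ≤ μ A * (ENNReal.ofReal 2 * μ (⋃ i ∈ I, R i)) := by
        rw [Set.inter_iUnion₂]
        have e1 : μ (⋃ i ∈ I, A ∩ R i) = ∑' i : I, μ (A ∩ R (i : Fin m)) :=
          measure_biUnion (Set.to_countable I)
            (fun i _ j _ hij => ((hRdisj hij).mono Set.inter_subset_right
              Set.inter_subset_right))
            (fun i _ => hARmeas i)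
        have e2 : μ (⋃ i ∈ I, R i) = ∑' i : I, μ (R (i : Fin m)) :=
          measure_biUnion (Set.to_countable I)
            (fun i _ j _ hij => hRdisj hij) (fun i _ => hRmeas i)
        rw [e1, e2, ← ENNReal.tsum_mul_left, ← ENNReal.tsum_mul_left]
        refine ENNReal.tsum_le_tsum fun i => ?_
        calc μ (A ∩ R (i : Fin m)) ≤ ENNReal.ofReal 2 * (μ A * μ (R (i : Fin m))) := hkey2 i
          _ = μ A * (ENNReal.ofReal 2 * μ (R (i : Fin m))) := by ring
      calc (μ A)⁻¹ * μ (A ∩ ⋃ i ∈ I, R i)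
          ≤ (μ A)⁻¹ * (μ A * (ENNReal.ofReal 2 * μ (⋃ i ∈ I, R i))) :=
            mul_le_mul_right hsum _
        _ = ((μ A)⁻¹ * μ A) * (ENNReal.ofReal 2 * μ (⋃ i ∈ I, R i)) := by ring
        _ = ENNReal.ofReal 2 * μ (⋃ i ∈ I, R i) := by
            rw [ENNReal.inv_mul_cancel hAne hAfin, one_mul]
    have t3 : (μ[|A]) (⋃ i, (A ∩ R i) ∩ F i) ≤ ENNReal.ofReal ε := by
      rw [cond_apply hA]
      have hsub : μ (A ∩ ⋃ i, (A ∩ R i) ∩ F i) ≤ ∑' i, μ ((A ∩ R i) ∩ F i) :=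
        le_trans (measure_mono (Set.inter_subset_right)) (measure_iUnion_le _)
      have hsum2 : ∑' i, μ ((A ∩ R i) ∩ F i) ≤ ENNReal.ofReal ε * μ A := by
        have : ∑' i, μ ((A ∩ R i) ∩ F i) ≤ ∑' i, ENNReal.ofReal ε * μ (A ∩ R i) :=
          ENNReal.tsum_le_tsum fun i => (hF i).2.1
        rw [ENNReal.tsum_mul_left] at this
        have hAsum : ∑' i, μ (A ∩ R i) = μ A := by
          rw [← measure_iUnion (fun i j hij => ((hRdisj hij).mono Set.inter_subset_right
              Set.inter_subset_right)) hARmeas, ← Set.inter_iUnion, hRcover, Set.inter_univ]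
        rw [hAsum] at this
        exact this
      calc (μ A)⁻¹ * μ (A ∩ ⋃ i, (A ∩ R i) ∩ F i)
          ≤ (μ A)⁻¹ * (ENNReal.ofReal ε * μ A) := mul_le_mul_right (hsub.trans hsum2) _
        _ = ENNReal.ofReal ε * ((μ A)⁻¹ * μ A) := by ring
        _ = ENNReal.ofReal ε := by rw [ENNReal.inv_mul_cancel hAne hAfin, mul_one]
    calc (μ[|A]) (Aᶜ ∪ (⋃ i ∈ I, R i) ∪ (⋃ i, (A ∩ R i) ∩ F i))
        ≤ (μ[|A]) Aᶜ + (μ[|A]) (⋃ i ∈ I, R i) + (μ[|A]) (⋃ i, (A ∩ R i) ∩ F i) :=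
          le_trans (measure_union_le _ _) (add_le_add_left (measure_union_le _ _) _)
      _ ≤ 0 + ENNReal.ofReal 2 * μ (⋃ i ∈ I, R i) + ENNReal.ofReal ε :=
          add_le_add (add_le_add t1.le t2) t3
      _ = ENNReal.ofReal 2 * μ (⋃ i ∈ I, R i) + ENNReal.ofReal ε := by rw [zero_add]
      _ < ENNReal.ofReal 2 * ENNReal.ofReal ε + ENNReal.ofReal ε := by
          refine ENNReal.add_lt_add_right (by simp) ?_
          exact (ENNReal.mul_lt_mul_iff_right (by norm_num) (by simp)).mpr hbad
      _ = ENNReal.ofReal (2 * ε + ε) := by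
          rw [ENNReal.ofReal_add (by positivity) hε.le, ENNReal.ofReal_mul (by norm_num)]
      _ ≤ ENNReal.ofReal (10 * ε) := ENNReal.ofReal_le_ofReal (by linarith)
  · -- main bound
    intro S hS hSE
    have hSA : S ⊆ A := by
      intro x hx
      by_contra hxA
      exact hSE hx (Or.inl (Or.inl hxA))
    -- decomposition facts
    have hTsub : ∀ i, S ∩ R i ⊆ A ∩ R i := fun i =>
      Set.inter_subset_inter_left _ hSA
    have hTbad : ∀ i ∈ I, S ∩ R i = ∅ := by
      intro i hi
      ext x
      simp only [Set.mem_inter_iff, Set.mem_empty_iff_false, iff_false, not_and]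
      intro hxS hxR
      exact hSE hxS (Or.inl (Or.inr (Set.mem_biUnion hi hxR)))
    have hTgoodF : ∀ i, S ∩ R i ⊆ (F i)ᶜ := by
      intro i x hx hxF
      exact hSE hx.1 (Or.inr (Set.mem_iUnion.mpr ⟨i, ⟨⟨hSA hx.1, hx.2⟩, hxF⟩⟩))
    -- per-atom inequalities
    have claim : ∀ i, ENNReal.ofReal (1 - 10 * ε) * (μ A * μ (θi i '' (S ∩ R i)))
          ≤ μ (S ∩ R i) ∧
        μ (S ∩ R i) ≤ ENNReal.ofReal (1 + 10 * ε) * (μ A * μ (θi i '' (S ∩ R i))) := by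
      intro i
      by_cases hi : i ∈ I
      · rw [hTbad i hi]
        simp
      · -- good atom
        have hTm : MeasurableSet (S ∩ R i) := hS.inter (hRmeas i)
        obtain ⟨hlo, hhi⟩ := (hF i).2.2 hi (S ∩ R i) hTm (hTgoodF i)
        have himsub : θi i '' (S ∩ R i) ⊆ R i := by
          intro y hy
          obtain ⟨x, hx, rfl⟩ := hy
          exact hθmaps i (hTsub i hx)
        -- rewrite conditional measures
        rw [cond_apply (hARmeas i) μ, cond_apply (hRmeas i) μ,
          Set.inter_eq_self_of_subset_right (hTsub i),
          Set.inter_eq_self_of_subset_right himsub] at hlo hhi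
        -- real quantities
        set α := (μ A).toReal with hαdef
        set a := (μ (A ∩ R i)).toReal with hadef
        set r := (μ (R i)).toReal with hrdef
        set c := ((μ[|A]) (R i)).toReal with hcdef
        set t := (μ (S ∩ R i)).toReal with htdef
        set u := (μ (θi i '' (S ∩ R i))).toReal with hudef
        have ha_pos : 0 < a := ENNReal.toReal_pos (hARne i) (hARfin i)
        have hrpos : 0 < r := hr_pos i
        have hcpos : 0 < c := hc_pos i
        have ht0 : 0 ≤ t := ENNReal.toReal_nonneg
        have hu0 : 0 ≤ u := ENNReal.toReal_nonneg
        have hεsmall : ε < 1/20 := by linarith [hε20]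
        have haeq : a = α * c := hac i
        have hfinmul : ∀ (x : Set X), ((μ (A ∩ R i))⁻¹ * μ x) ≠ ⊤ :=
          fun x => ENNReal.mul_ne_top (ENNReal.inv_ne_top.mpr (hARne i)) (measure_ne_top _ _)
        have hfinmul2 : (ENNReal.ofReal (1 - ε) * ((μ (R i))⁻¹ * μ (θi i '' (S ∩ R i)))) ≠ ⊤ :=
          ENNReal.mul_ne_top (by simp)
            (ENNReal.mul_ne_top (ENNReal.inv_ne_top.mpr (hRne i)) (measure_ne_top _ _))
        have hfinmul3 : (ENNReal.ofReal (1 + ε) * ((μ (R i))⁻¹ * μ (θi i '' (S ∩ R i)))) ≠ ⊤ :=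
          ENNReal.mul_ne_top (by simp)
            (ENNReal.mul_ne_top (ENNReal.inv_ne_top.mpr (hRne i)) (measure_ne_top _ _))
        -- convert to real inequalities
        have hlo' : (1 - ε) * (r⁻¹ * u) ≤ a⁻¹ * t := by
          have := (ENNReal.toReal_le_toReal hfinmul2 (hfinmul _)).mpr hlo
          rwa [ENNReal.toReal_mul, ENNReal.toReal_mul, ENNReal.toReal_mul,
            ENNReal.toReal_inv, ENNReal.toReal_inv,
            ENNReal.toReal_ofReal (by linarith)] at this
        have hhi' : a⁻¹ * t ≤ (1 + ε) * (r⁻¹ * u) := by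
          have := (ENNReal.toReal_le_toReal (hfinmul _) hfinmul3).mpr hhi
          rwa [ENNReal.toReal_mul, ENNReal.toReal_mul, ENNReal.toReal_mul,
            ENNReal.toReal_inv, ENNReal.toReal_inv,
            ENNReal.toReal_ofReal (by linarith)] at this
        -- clear denominators
        have hlo'' : (1 - ε) * u * a ≤ t * r := by
          rw [inv_mul_eq_div, inv_mul_eq_div, ← mul_div_assoc] at hlo'
          exact (div_le_div_iff₀ hrpos ha_pos).mp hlo'
        have hhi'' : t * r ≤ (1 + ε) * u * a := by
          rw [inv_mul_eq_div, inv_mul_eq_div, ← mul_div_assoc] at hhi'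
          exact (div_le_div_iff₀ ha_pos hrpos).mp hhi'
        have hr1 : (1 - ε) * c ≤ r := (hrc i).1
        have hr2 : r ≤ (1 + ε) * c := (hrc i).2
        -- the real per-atom bounds
        have step1 : (1 - ε) * u * α ≤ t * (1 + ε) := by
          have s1 : ((1 - ε) * u * α) * c ≤ (t * (1 + ε)) * c := by
            have s0 : (1 - ε) * u * a ≤ t * ((1 + ε) * c) :=
              hlo''.trans (mul_le_mul_of_nonneg_left hr2 ht0)
            rw [haeq] at s0
            nlinarith [s0]
          exact le_of_mul_le_mul_right s1 hcpos
        have hrealo : (1 - 10 * ε) * (α * u) ≤ t := by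
          nlinarith [step1, mul_nonneg hu0 hα_pos.le,
            mul_nonneg (mul_nonneg hu0 hα_pos.le) hε.le,
            mul_nonneg (mul_nonneg (mul_nonneg hu0 hα_pos.le) hε.le) hε.le]
        have step2 : t * (1 - ε) ≤ (1 + ε) * u * α := by
          have s1 : (t * (1 - ε)) * c ≤ ((1 + ε) * u * α) * c := by
            have s0 : t * ((1 - ε) * c) ≤ (1 + ε) * u * a :=
              (mul_le_mul_of_nonneg_left hr1 ht0).trans hhi''
            rw [haeq] at s0
            nlinarith [s0]
          exact le_of_mul_le_mul_right s1 hcpos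
        have hreahi : t ≤ (1 + 10 * ε) * (α * u) := by
          nlinarith [step2, mul_nonneg hu0 hα_pos.le,
            mul_nonneg (mul_nonneg hu0 hα_pos.le) hε.le,
            mul_nonneg (mul_nonneg (mul_nonneg hu0 hα_pos.le) hε.le) hε.le]
        constructor
        · rw [← ENNReal.toReal_le_toReal
            (ENNReal.mul_ne_top (by simp) (ENNReal.mul_ne_top hAfin (measure_ne_top _ _)))
            (measure_ne_top μ _), ENNReal.toReal_mul, ENNReal.toReal_mul,
            ENNReal.toReal_ofReal (by linarith)]
          exact hrealo
        · rw [← ENNReal.toReal_le_toReal (measure_ne_top μ _)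
            (ENNReal.mul_ne_top (by simp) (ENNReal.mul_ne_top hAfin (measure_ne_top _ _))),
            ENNReal.toReal_mul, ENNReal.toReal_mul, ENNReal.toReal_ofReal (by linarith)]
          exact hreahi
    -- decomposition of S and θ '' S
    have hSdec : S = ⋃ i, S ∩ R i := by
      rw [← Set.inter_iUnion, hRcover, Set.inter_univ]
    have hμS : μ S = ∑' i, μ (S ∩ R i) := by
      conv_lhs => rw [hSdec]
      exact measure_iUnion (fun i j hij => ((hRdisj hij).mono Set.inter_subset_right
        Set.inter_subset_right)) (fun i => hS.inter (hRmeas i))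
    have hθS : θ '' S = ⋃ i, θi i '' (S ∩ R i) := by
      conv_lhs => rw [hSdec]
      rw [Set.image_iUnion]
      refine Set.iUnion_congr fun i => ?_
      apply Set.image_congr
      intro x hx
      exact hθ i x ⟨hSA hx.1, hx.2⟩
    have hμθS : μ (θ '' S) = ∑' i, μ (θi i '' (S ∩ R i)) := by
      rw [hθS]
      refine measure_iUnion ?_ (fun i => hθim i _ (hS.inter (hRmeas i)))
      intro i j hij
      refine (hRdisj hij).mono ?_ ?_
      · exact (Set.image_mono (hTsub i)).trans (hθmaps i).image_subset
      · exact (Set.image_mono (hTsub j)).trans (hθmaps j).image_subset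
    have hcondS : (μ[|A]) S = (μ A)⁻¹ * μ S := by
      rw [cond_apply hA, Set.inter_eq_self_of_subset_right hSA]
    constructor
    · -- lower bound
      have key : ENNReal.ofReal (1 - 10 * ε) * (μ A * μ (θ '' S)) ≤ μ S := by
        rw [hμθS, hμS, ← ENNReal.tsum_mul_left, ← ENNReal.tsum_mul_left]
        exact ENNReal.tsum_le_tsum fun i => (claim i).1
      rw [hcondS]
      calc ENNReal.ofReal (1 - 10 * ε) * μ (θ '' S)
          = (μ A)⁻¹ * (μ A * (ENNReal.ofReal (1 - 10 * ε) * μ (θ '' S))) := by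
            rw [← mul_assoc, ENNReal.inv_mul_cancel hAne hAfin, one_mul]
        _ = (μ A)⁻¹ * (ENNReal.ofReal (1 - 10 * ε) * (μ A * μ (θ '' S))) := by
            rw [mul_left_comm (μ A)]
        _ ≤ (μ A)⁻¹ * μ S := mul_le_mul_right key _
    · -- upper bound
      have key : μ S ≤ ENNReal.ofReal (1 + 10 * ε) * (μ A * μ (θ '' S)) := by
        rw [hμθS, hμS, ← ENNReal.tsum_mul_left, ← ENNReal.tsum_mul_left]
        exact ENNReal.tsum_le_tsum fun i => (claim i).2
      rw [hcondS]
      calc (μ A)⁻¹ * μ S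
          ≤ (μ A)⁻¹ * (ENNReal.ofReal (1 + 10 * ε) * (μ A * μ (θ '' S))) :=
            mul_le_mul_right key _
        _ = ((μ A)⁻¹ * μ A) * (ENNReal.ofReal (1 + 10 * ε) * μ (θ '' S)) := by ring
        _ = ENNReal.ofReal (1 + 10 * ε) * μ (θ '' S) := by
            rw [ENNReal.inv_mul_cancel hAne hAfin, one_mul]
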